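/- (Safety of the unicycle under the integral HOCBF constraint, with auxiliary dynamics u₂' = ν.) Let r > 0. Along any solution of the unicycle model in which u₂ is differentiable with u₂'(t) = ν(t) for a function ν : ℝ → ℝ, suppose the initial conditions ρ(0) − r ≥ 0, ρ'(0) + ρ(0) − r ≥ 0, and ρ''(0) + 2ρ'(0) + ρ(0) − r ≥ 0 hold, and suppose that for all t ≥ 0 the integral-HOCBF constraint holds: (v q/ρ)·u₁ + (p/(Mρ))·ν + (u₂/M)·((3v + 2φq)/ρ − 3v p²/ρ³) − v φ² p/ρ − 3v³ p/ρ³ − 3v² φ p q/ρ³ + 3v³ p³/ρ⁵ + 3·((p/(Mρ))·u₂ + v²/ρ + v φ q/ρ − v² p²/ρ³) + 3·v·p/ρ + ρ − r ≥ 0 (all functions evaluated at t). Then ρ(t) ≥ r for all t ≥ 0, i.e., the safety constraint √((x−x₀)² + (y−y₀)²) ≥ r is satisfied for all t ≥ 0. -/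

import Mathlib

/-- Comparison lemma: if `f' + f ≥ 0` on `[0,∞)` and `f 0 ≥ 0` then `f ≥ 0` on `[0,∞)`. -/
lemma unicycle_comp_aux (f g : ℝ → ℝ) (hfg : ∀ t, HasDerivAt f (g t) t)
    (h0 : 0 ≤ f 0) (h : ∀ t, 0 ≤ t → 0 ≤ g t + f t) : ∀ t, 0 ≤ t → 0 ≤ f t := by
  intro t ht
  have hF : ∀ s : ℝ, HasDerivAt (fun u => Real.exp u * f u) (Real.exp s * (g s + f s)) s := by
    intro s
    have h1 := (Real.hasDerivAt_exp s).mul (hfg s)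
    refine h1.congr_deriv (Eq.symm ?_); ring
  have hmono : MonotoneOn (fun u => Real.exp u * f u) (Set.Ici (0:ℝ)) := by
    apply monotoneOn_of_deriv_nonneg (convex_Ici 0)
    · have hfd : Differentiable ℝ f := fun s => (hfg s).differentiableAt
      exact (Real.continuous_exp.mul hfd.continuous).continuousOn
    · intro s _
      exact (hF s).differentiableAt.differentiableWithinAt
    · intro s hs
      rw [interior_Ici] at hs
      rw [(hF s).deriv]
      exact mul_nonneg (Real.exp_nonneg s) (h s (le_of_lt hs))
  have hle := hmono Set.self_mem_Ici (Set.mem_Ici.mpr ht) ht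
  simp only [Real.exp_zero, one_mul] at hle
  nlinarith [Real.exp_pos t, hle]

set_option maxHeartbeats 2000000 in
/-- Safety of the unicycle under the integral HOCBF constraint with
auxiliary dynamics `u₂' = ν`: if the third-order HOCBF initial conditions
hold and the integral-HOCBF constraint holds for all `t ≥ 0`, then
`ρ t ≥ r` for all `t ≥ 0`. -/
theorem unicycle_safety_integral_hocbf
    (r : ℝ) (hr : 0 < r)
    (M : ℝ) (hM : 0 < M)
    (x y v θ φ u₁ u₂ : ℝ → ℝ)
    (hx : Differentiable ℝ x) (hy : Differentiable ℝ y)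
    (hv : Differentiable ℝ v) (hθ : Differentiable ℝ θ)
    (hφ : Differentiable ℝ φ)
    (hu₁ : Continuous u₁) (hu₂ : Continuous u₂)
    (hdx : ∀ t, deriv x t = v t * Real.cos (θ t))
    (hdy : ∀ t, deriv y t = v t * Real.sin (θ t))
    (hdv : ∀ t, deriv v t = u₂ t / M)
    (hdθ : ∀ t, deriv θ t = φ t)
    (hdφ : ∀ t, deriv φ t = u₁ t)
    (ν : ℝ → ℝ) (hu₂d : Differentiable ℝ u₂)
    (hdu₂ : ∀ t, deriv u₂ t = ν t)
    (x₀ y₀ : ℝ) (ρ p q : ℝ → ℝ)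
    (hρ : ∀ t, ρ t = Real.sqrt ((x t - x₀) ^ 2 + (y t - y₀) ^ 2))
    (hp : ∀ t, p t = (x t - x₀) * Real.cos (θ t) + (y t - y₀) * Real.sin (θ t))
    (hq : ∀ t, q t = -(x t - x₀) * Real.sin (θ t) + (y t - y₀) * Real.cos (θ t))
    (hρpos : ∀ t, 0 < ρ t)
    (hinit0 : ρ 0 - r ≥ 0)
    (hinit1 : deriv ρ 0 + ρ 0 - r ≥ 0)
    (hinit2 : deriv (deriv ρ) 0 + 2 * deriv ρ 0 + ρ 0 - r ≥ 0)
    (hconstr : ∀ t : ℝ, 0 ≤ t →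
      (v t * q t / ρ t) * u₁ t
        + (p t / (M * ρ t)) * ν t
        + (u₂ t / M) * ((3 * v t + 2 * φ t * q t) / ρ t
            - 3 * v t * (p t) ^ 2 / (ρ t) ^ 3)
        - v t * (φ t) ^ 2 * p t / ρ t
        - 3 * (v t) ^ 3 * p t / (ρ t) ^ 3
        - 3 * (v t) ^ 2 * φ t * p t * q t / (ρ t) ^ 3
        + 3 * (v t) ^ 3 * (p t) ^ 3 / (ρ t) ^ 5
        + 3 * ((p t / (M * ρ t)) * u₂ t + (v t) ^ 2 / ρ t
            + v t * φ t * q t / ρ t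
            - (v t) ^ 2 * (p t) ^ 2 / (ρ t) ^ 3)
        + 3 * (v t * p t / ρ t) + ρ t - r ≥ 0) :
    ∀ t : ℝ, 0 ≤ t →
      Real.sqrt ((x t - x₀) ^ 2 + (y t - y₀) ^ 2) ≥ r := by
  have hM0 : M ≠ 0 := hM.ne'
  have hρ0 : ∀ t, ρ t ≠ 0 := fun t => (hρpos t).ne'
  have hθ' : ∀ t, HasDerivAt θ (φ t) t := fun t => hdθ t ▸ (hθ t).hasDerivAt
  have hv' : ∀ t, HasDerivAt v (u₂ t / M) t := fun t => hdv t ▸ (hv t).hasDerivAt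
  have hφ' : ∀ t, HasDerivAt φ (u₁ t) t := fun t => hdφ t ▸ (hφ t).hasDerivAt
  have hu₂' : ∀ t, HasDerivAt u₂ (ν t) t := fun t => hdu₂ t ▸ (hu₂d t).hasDerivAt
  have hX : ∀ t, HasDerivAt (fun s => x s - x₀) (v t * Real.cos (θ t)) t :=
    fun t => hdx t ▸ ((hx t).hasDerivAt.sub_const x₀)
  have hY : ∀ t, HasDerivAt (fun s => y s - y₀) (v t * Real.sin (θ t)) t :=
    fun t => hdy t ▸ ((hy t).hasDerivAt.sub_const y₀)
  -- derivative of p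
  have hp' : ∀ t, HasDerivAt p (v t + φ t * q t) t := by
    intro t
    have h1 := ((hX t).mul ((hθ' t).cos)).add ((hY t).mul ((hθ' t).sin))
    have hpe : p = fun s => (x s - x₀) * Real.cos (θ s) + (y s - y₀) * Real.sin (θ s) :=
      funext hp
    rw [hpe]
    refine h1.congr_deriv (Eq.symm ?_)
    rw [hq t]
    linear_combination (-(v t)) * Real.sin_sq_add_cos_sq (θ t)
  -- derivative of q
  have hq' : ∀ t, HasDerivAt q (-(φ t * p t)) t := by
    intro t
    have h1 := (((hX t).neg).mul ((hθ' t).sin)).add ((hY t).mul ((hθ' t).cos))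
    have hqe : q = fun s => -(x s - x₀) * Real.sin (θ s) + (y s - y₀) * Real.cos (θ s) :=
      funext hq
    rw [hqe]
    refine h1.congr_deriv (Eq.symm ?_)
    simp only [Pi.mul_apply, Pi.neg_apply, Pi.pow_apply, Pi.div_apply]
    rw [hp t]; ring
  -- derivative of ρ
  have hρ' : ∀ t, HasDerivAt ρ (v t * p t / ρ t) t := by
    intro t
    have hw : HasDerivAt (fun s => (x s - x₀) ^ 2 + (y s - y₀) ^ 2)
        (2 * (x t - x₀) * (v t * Real.cos (θ t)) + 2 * (y t - y₀) * (v t * Real.sin (θ t))) t := by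
      have h1 := ((hX t).pow 2).add ((hY t).pow 2)
      refine h1.congr_deriv (Eq.symm ?_)
      push_cast
      ring
    have hwne : (x t - x₀) ^ 2 + (y t - y₀) ^ 2 ≠ 0 := by
      have h2 := hρpos t
      rw [hρ t] at h2
      exact (Real.sqrt_pos.mp h2).ne'
    have h3 := hw.sqrt hwne
    have hρe : ρ = fun s => Real.sqrt ((x s - x₀) ^ 2 + (y s - y₀) ^ 2) := funext hρ
    have hsne : Real.sqrt ((x t - x₀) ^ 2 + (y t - y₀) ^ 2) ≠ 0 := by
      rw [← hρ t]; exact hρ0 t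
    rw [hρe]
    refine h3.congr_deriv (Eq.symm ?_)
    beta_reduce
    rw [hp t]
    field_simp
  -- second derivative of ρ
  have hρ1' : ∀ t, HasDerivAt (fun s => v s * p s / ρ s)
      (p t / (M * ρ t) * u₂ t + (v t) ^ 2 / ρ t + v t * φ t * q t / ρ t
        - (v t) ^ 2 * (p t) ^ 2 / (ρ t) ^ 3) t := by
    intro t
    have h1 := ((hv' t).mul (hp' t)).div (hρ' t) (hρ0 t)
    have hρt : ρ t ≠ 0 := hρ0 t
    refine h1.congr_deriv (Eq.symm ?_)
    simp only [Pi.mul_apply, Pi.neg_apply, Pi.pow_apply, Pi.div_apply]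
    field_simp
    ring
  -- third derivative of ρ
  have hρ2' : ∀ t, HasDerivAt (fun s => p s / (M * ρ s) * u₂ s + (v s) ^ 2 / ρ s
        + v s * φ s * q s / ρ s - (v s) ^ 2 * (p s) ^ 2 / (ρ s) ^ 3)
      ((v t * q t / ρ t) * u₁ t
        + (p t / (M * ρ t)) * ν t
        + (u₂ t / M) * ((3 * v t + 2 * φ t * q t) / ρ t
            - 3 * v t * (p t) ^ 2 / (ρ t) ^ 3)
        - v t * (φ t) ^ 2 * p t / ρ t
        - 3 * (v t) ^ 3 * p t / (ρ t) ^ 3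
        - 3 * (v t) ^ 2 * φ t * p t * q t / (ρ t) ^ 3
        + 3 * (v t) ^ 3 * (p t) ^ 3 / (ρ t) ^ 5) t := by
    intro t
    have hMρ : M * ρ t ≠ 0 := mul_ne_zero hM0 (hρ0 t)
    have h1 := ((hp' t).div ((hρ' t).const_mul M) hMρ).mul (hu₂' t)
    have h2 := ((hv' t).pow 2).div (hρ' t) (hρ0 t)
    have h3 := (((hv' t).mul (hφ' t)).mul (hq' t)).div (hρ' t) (hρ0 t)
    have h4 := (((hv' t).pow 2).mul ((hp' t).pow 2)).div ((hρ' t).pow 3) (pow_ne_zero 3 (hρ0 t))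
    have h5 := ((h1.add h2).add h3).sub h4
    have hρt : ρ t ≠ 0 := hρ0 t
    refine h5.congr_deriv (Eq.symm ?_)
    simp only [Pi.mul_apply, Pi.neg_apply, Pi.pow_apply, Pi.div_apply]
    push_cast
    field_simp
    ring
  -- rewrite the initial-condition derivatives
  have hd1 : deriv ρ = fun t => v t * p t / ρ t := funext fun t => (hρ' t).deriv
  have hd2 : deriv (deriv ρ) 0 = p 0 / (M * ρ 0) * u₂ 0 + (v 0) ^ 2 / ρ 0
      + v 0 * φ 0 * q 0 / ρ 0 - (v 0) ^ 2 * (p 0) ^ 2 / (ρ 0) ^ 3 := by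
    rw [hd1]; exact (hρ1' 0).deriv
  have hd1' : deriv ρ 0 = v 0 * p 0 / ρ 0 := by rw [hd1]
  -- Step A : b'' + 2 b' + b ≥ 0 on [0, ∞)
  have stepA : ∀ t : ℝ, 0 ≤ t →
      0 ≤ (p t / (M * ρ t) * u₂ t + (v t) ^ 2 / ρ t + v t * φ t * q t / ρ t
        - (v t) ^ 2 * (p t) ^ 2 / (ρ t) ^ 3) + 2 * (v t * p t / ρ t) + ρ t - r := by
    apply unicycle_comp_aux
      (f := fun t => (p t / (M * ρ t) * u₂ t + (v t) ^ 2 / ρ t + v t * φ t * q t / ρ t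
        - (v t) ^ 2 * (p t) ^ 2 / (ρ t) ^ 3) + 2 * (v t * p t / ρ t) + ρ t - r)
      (g := fun t => ((v t * q t / ρ t) * u₁ t
        + (p t / (M * ρ t)) * ν t
        + (u₂ t / M) * ((3 * v t + 2 * φ t * q t) / ρ t
            - 3 * v t * (p t) ^ 2 / (ρ t) ^ 3)
        - v t * (φ t) ^ 2 * p t / ρ t
        - 3 * (v t) ^ 3 * p t / (ρ t) ^ 3
        - 3 * (v t) ^ 2 * φ t * p t * q t / (ρ t) ^ 3
        + 3 * (v t) ^ 3 * (p t) ^ 3 / (ρ t) ^ 5)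
        + 2 * (p t / (M * ρ t) * u₂ t + (v t) ^ 2 / ρ t + v t * φ t * q t / ρ t
          - (v t) ^ 2 * (p t) ^ 2 / (ρ t) ^ 3)
        + v t * p t / ρ t)
    · intro t
      exact (((hρ2' t).add ((hρ1' t).const_mul 2)).add (hρ' t)).sub_const r
    · rw [hd1', hd2] at hinit2
      linarith
    · intro t ht
      have hc := hconstr t ht
      linarith
  -- Step B : b' + b ≥ 0 on [0, ∞)
  have stepB : ∀ t : ℝ, 0 ≤ t → 0 ≤ v t * p t / ρ t + ρ t - r := by
    apply unicycle_comp_aux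
      (f := fun t => v t * p t / ρ t + ρ t - r)
      (g := fun t => (p t / (M * ρ t) * u₂ t + (v t) ^ 2 / ρ t + v t * φ t * q t / ρ t
        - (v t) ^ 2 * (p t) ^ 2 / (ρ t) ^ 3) + v t * p t / ρ t)
    · intro t
      exact ((hρ1' t).add (hρ' t)).sub_const r
    · rw [hd1'] at hinit1
      linarith
    · intro t ht
      have hA := stepA t ht
      linarith
  -- Step C : b ≥ 0 on [0, ∞)
  have stepC : ∀ t : ℝ, 0 ≤ t → 0 ≤ ρ t - r := by
    apply unicycle_comp_aux
      (f := fun t => ρ t - r)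
      (g := fun t => v t * p t / ρ t)
    · intro t
      exact (hρ' t).sub_const r
    · linarith
    · intro t ht
      have hB := stepB t ht
      linarith
  intro t ht
  have := stepC t ht
  rw [← hρ t]
  linarith
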